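/- arXiv:1605.02353 — 7 statements merged into one kernel-verified Lean document; each statement's English description precedes it below -/
import Mathlib

section
/- Let L be the Laplacian of a weighted multigraph and suppose the first column of L is (d, −a)ᵀ with d > 0. Then the clique matrix C₁(L) = L₁ − (1/d) L(:,1) L(:,1)ᵀ, where L₁ is the Laplacian of edges incident on vertex 1, equals Σ_{i∼1} Σ_{j∼1} (w(1,i)w(1,j)/d) b_{(i,j)} b_{(i,j)}ᵀ; in particular C₁(L) is a Laplacian matrix (a nonnegative combination of pair-vector outer products). -/
/-- The pair-vector `b_{(i,j)} = e_j - e_i`. -/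
def pairVec {V : Type*} [DecidableEq V] (u v : V) : V → ℝ :=
  fun i => (if i = v then 1 else 0) - (if i = u then 1 else 0)

/-- Let `L` be the Laplacian of a weighted graph with positive degree
`d = L v₀ v₀ > 0` at vertex `v₀`.  The clique matrix
`C₁(L) = L₁ - (1/d) • L(:,v₀) L(:,v₀)ᵀ` (where `L₁` is the Laplacian of the edges incident
on `v₀`) equals `Σ_{i∼v₀} Σ_{j∼v₀} (w(v₀,i) w(v₀,j) / d) • b_{(i,j)} b_{(i,j)}ᵀ`
(each unordered pair being counted twice in the ordered double sum, whence the factor `1/2`);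
in particular `C₁(L)` is a Laplacian matrix, being a nonnegative combination of pair-vector
outer products. -/
theorem clique_structure_of_schur_complement
    {V : Type*} [Fintype V] [DecidableEq V]
    (w : V → V → ℝ) (hsym : ∀ i j, w i j = w j i) (hnonneg : ∀ i j, 0 ≤ w i j)
    (hdiag : ∀ i, w i i = 0)
    (L : Matrix V V ℝ)
    (hL : L = Matrix.of fun i j => if i = j then ∑ k, w i k else -(w i j))
    (v₀ : V) (hd : 0 < L v₀ v₀)
    (L₁ : Matrix V V ℝ)
    (hL₁ : L₁ = ∑ i, w v₀ i • Matrix.vecMulVec (pairVec v₀ i) (pairVec v₀ i)) :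
    L₁ - (L v₀ v₀)⁻¹ • Matrix.vecMulVec (fun i => L i v₀) (fun i => L i v₀)
      = (1 / 2 : ℝ) • ∑ i, ∑ j,
          (w v₀ i * w v₀ j / L v₀ v₀) • Matrix.vecMulVec (pairVec i j) (pairVec i j) := by
  set d : ℝ := ∑ k, w v₀ k with hdef
  have hdd : L v₀ v₀ = d := by simp [hL, hdef]
  have hd0 : d ≠ 0 := by rw [hdd] at hd; exact hd.ne'
  have hcol : ∀ x, L x v₀ = (if x = v₀ then d else 0) - w v₀ x := by
    intro x
    simp only [hL, Matrix.of_apply]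
    split_ifs with h
    · subst h; simp [hdiag, hdef]
    · rw [hsym]; ring
  ext x y
  simp only [hL₁, Matrix.sub_apply, Matrix.smul_apply, Matrix.sum_apply,
    Matrix.vecMulVec_apply, smul_eq_mul, hdd, hcol x, hcol y]
  have key1 : (∑ i, w v₀ i * (pairVec v₀ i x * pairVec v₀ i y))
      = (if x = y then w v₀ x else 0) - (if y = v₀ then w v₀ x else 0)
        - (if x = v₀ then w v₀ y else 0)
        + (if x = v₀ then (if y = v₀ then d else 0) else 0) := by
    simp only [pairVec, sub_mul, mul_sub, mul_ite, ite_mul, mul_one, mul_zero, one_mul,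
      zero_mul, Finset.sum_sub_distrib, Finset.sum_ite_eq, Finset.mem_univ, if_true,
      Finset.sum_ite_irrel, Finset.sum_const_zero]
    split_ifs <;> simp_all <;> ring
  have key2 : (∑ i, ∑ j, (w v₀ i * w v₀ j) * (pairVec i j x * pairVec i j y))
      = 2 * d * (if x = y then w v₀ x else 0) - 2 * w v₀ x * w v₀ y := by
    simp only [pairVec, sub_mul, mul_sub, mul_ite, ite_mul, mul_one, mul_zero, one_mul,
      zero_mul, Finset.sum_sub_distrib, Finset.sum_ite_eq, Finset.mem_univ, if_true,
      Finset.sum_ite_irrel, Finset.sum_const_zero, ← Finset.sum_mul, ← Finset.mul_sum]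
    split_ifs <;> simp_all <;> ring
  have hre : ∀ i j : V, (w v₀ i * w v₀ j / d) * (pairVec i j x * pairVec i j y)
      = d⁻¹ * ((w v₀ i * w v₀ j) * (pairVec i j x * pairVec i j y)) := by
    intro i j; ring
  simp only [hre, ← Finset.mul_sum]
  rw [key2, key1]
  split_ifs <;> subst_vars <;> field_simp <;> ring_nf <;> simp_all [hdiag] <;> ring
end

section
/- Eliminating a vertex v from a Laplacian yields another Laplacian: if L is the Laplacian of a connected weighted graph and L(v,v) > 0, then the Schur complement S = L − (1/L(v,v)) L(:,v) L(:,v)ᵀ is again a Laplacian matrix (symmetric, diagonally dominant, nonpositive off-diagonals, zero row sums). -/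
/-- Eliminating a vertex `v` from a Laplacian yields another Laplacian:
if `L` is the Laplacian of a weighted graph (with nonnegative symmetric weights) and
`L v v > 0`, then the Schur complement `S = L - (1 / L v v) • L(:,v) L(:,v)ᵀ` is again a
Laplacian matrix: symmetric, with nonpositive off-diagonal entries, zero row sums, and
diagonally dominant. -/
theorem schur_complement_of_laplacian_is_laplacian
    {V : Type*} [Fintype V] [DecidableEq V]
    (w : V → V → ℝ) (hsym : ∀ i j, w i j = w j i) (hnonneg : ∀ i j, 0 ≤ w i j)
    (hdiag : ∀ i, w i i = 0)
    (L : Matrix V V ℝ)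
    (hL : L = Matrix.of fun i j => if i = j then ∑ k, w i k else -(w i j))
    (v : V) (hv : 0 < L v v)
    (S : Matrix V V ℝ)
    (hS : S = L - (L v v)⁻¹ • Matrix.vecMulVec (fun i => L i v) (fun i => L i v)) :
    S.IsSymm ∧ (∀ i j, i ≠ j → S i j ≤ 0) ∧ (∀ i, ∑ j, S i j = 0) ∧
      (∀ i, ∑ j ∈ Finset.univ.filter (· ≠ i), |S i j| ≤ S i i) := by
  have hLsym : ∀ i j, L i j = L j i := by
    intro i j; subst hL; simp only [Matrix.of_apply]
    by_cases h : i = j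
    · subst h; rfl
    · rw [if_neg h, if_neg (Ne.symm h), hsym]
  have hLoff : ∀ i j, i ≠ j → L i j = -(w i j) := by
    intro i j h; subst hL; simp only [Matrix.of_apply, if_neg h]
  have hrow : ∀ i, ∑ j, L i j = 0 := by
    intro i
    rw [← Finset.sum_erase_add _ _ (Finset.mem_univ i)]
    have h1 : ∑ j ∈ Finset.univ.erase i, L i j
        = ∑ j ∈ Finset.univ.erase i, -(w i j) := by
      apply Finset.sum_congr rfl
      intro j hj
      exact hLoff i j (Ne.symm (Finset.ne_of_mem_erase hj))
    have h2 : L i i = ∑ k, w i k := by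
      subst hL; simp
    rw [h1, h2, ← Finset.sum_erase_add _ (fun j => w i j) (Finset.mem_univ i),
      hdiag i, Finset.sum_neg_distrib]
    ring
  have hSent : ∀ i j, S i j = L i j - (L v v)⁻¹ * (L i v * L j v) := by
    intro i j
    rw [hS]
    simp [Matrix.sub_apply, Matrix.smul_apply, Matrix.vecMulVec_apply, smul_eq_mul,
      hLsym j v]
  have hoff : ∀ i j, i ≠ j → S i j ≤ 0 := by
    intro i j hij
    rw [hSent]
    by_cases hi : i = v
    · subst hi
      have : L i j - (L i i)⁻¹ * (L i i * L j i) = L i j - L j i := by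
        field_simp
      rw [this, hLsym i j]
      simp
    · by_cases hj : j = v
      · subst hj
        have : L i j - (L j j)⁻¹ * (L i j * L j j) = L i j - L i j := by
          field_simp
        rw [this]; simp
      · have h1 : L i j ≤ 0 := by rw [hLoff i j hij]; simp [hnonneg]
        have h2 : L i v ≤ 0 := by rw [hLoff i v hi]; simp [hnonneg]
        have h3 : L j v ≤ 0 := by rw [hLoff j v hj]; simp [hnonneg]
        have h4 : 0 ≤ (L v v)⁻¹ * (L i v * L j v) := by
          have h5 : 0 ≤ L i v * L j v := by nlinarith
          exact mul_nonneg (inv_nonneg.mpr hv.le) h5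
        linarith
  have hSrow : ∀ i, ∑ j, S i j = 0 := by
    intro i
    have hcol : ∑ j, L j v = 0 := by
      rw [Finset.sum_congr rfl fun j _ => hLsym j v]; exact hrow v
    calc ∑ j, S i j = ∑ j, (L i j - (L v v)⁻¹ * L i v * L j v) := by
          apply Finset.sum_congr rfl; intro j _; rw [hSent]; ring
      _ = (∑ j, L i j) - (L v v)⁻¹ * L i v * ∑ j, L j v := by
          rw [Finset.sum_sub_distrib, Finset.mul_sum]
      _ = 0 := by rw [hrow, hcol]; ring
  refine ⟨?_, hoff, hSrow, ?_⟩
  · unfold Matrix.IsSymm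
    ext i j
    rw [Matrix.transpose_apply, hSent, hSent, hLsym j i]
    ring
  · intro i
    have habs : ∑ j ∈ Finset.univ.filter (· ≠ i), |S i j|
        = ∑ j ∈ Finset.univ.filter (· ≠ i), -(S i j) := by
      apply Finset.sum_congr rfl
      intro j hj
      have hj' : j ≠ i := (Finset.mem_filter.mp hj).2
      exact abs_of_nonpos (hoff i j (Ne.symm hj'))
    have hsplit : ∑ j, S i j = S i i + ∑ j ∈ Finset.univ.filter (· ≠ i), S i j := by
      rw [Finset.filter_ne', ← Finset.add_sum_erase _ (S i) (Finset.mem_univ i)]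
    rw [habs, Finset.sum_neg_distrib]
    have := hSrow i
    rw [hsplit] at this
    linarith
end

section
/- Effective resistance is a metric on the vertices of a connected graph: for distinct vertices u, v, z of a connected weighted multigraph with Laplacian L, ‖(L⁺)^{1/2} b_{u,z} b_{u,z}ᵀ (L⁺)^{1/2}‖ ≤ ‖(L⁺)^{1/2} b_{u,v} b_{u,v}ᵀ (L⁺)^{1/2}‖ + ‖(L⁺)^{1/2} b_{v,z} b_{v,z}ᵀ (L⁺)^{1/2}‖, i.e., b_{u,z}ᵀ L⁺ b_{u,z} ≤ b_{u,v}ᵀ L⁺ b_{u,v} + b_{v,z}ᵀ L⁺ b_{v,z}. -/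
open Matrix

set_option linter.unusedSectionVars false
set_option linter.unusedVariables false


section aux
variable {V E : Type*} [Fintype V] [Fintype E] [DecidableEq V]

lemma pairVec_dot (u v : V) (x : V → ℝ) : pairVec u v ⬝ᵥ x = x v - x u := by
  simp [pairVec, dotProduct, sub_mul, Finset.sum_sub_distrib, ite_mul]

lemma dot_pairVec (u v : V) (x : V → ℝ) : x ⬝ᵥ pairVec u v = x v - x u := by
  simp [pairVec, dotProduct, mul_sub, Finset.sum_sub_distrib, mul_ite]

lemma pairVec_add (u v z : V) : pairVec u z = pairVec u v + pairVec v z := by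
  funext i; simp only [pairVec, Pi.add_apply]; ring

lemma smul_vecMulVec_mulVec (c : ℝ) (a b x : V → ℝ) :
    (c • Matrix.vecMulVec a b).mulVec x = (c * (b ⬝ᵥ x)) • a := by
  funext i
  simp only [mulVec, dotProduct, Matrix.smul_apply, vecMulVec_apply, Pi.smul_apply, smul_eq_mul,
    Finset.mul_sum, Finset.sum_mul]
  exact Finset.sum_congr rfl fun j _ => by ring

lemma sum_mulVec {ι : Type*} (s : Finset ι) (M : ι → Matrix V V ℝ) (x : V → ℝ) :
    (∑ e ∈ s, M e).mulVec x = ∑ e ∈ s, (M e).mulVec x := by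
  classical
  induction s using Finset.induction with
  | empty => simp [Matrix.zero_mulVec]
  | insert _ _ h ih => rw [Finset.sum_insert h, Finset.sum_insert h, Matrix.add_mulVec, ih]

variable (ends : E → V × V) (w : E → ℝ) (L : Matrix V V ℝ)
  (hL : L = ∑ e, w e • Matrix.vecMulVec
      (pairVec (ends e).1 (ends e).2) (pairVec (ends e).1 (ends e).2))

include hL

lemma L_mulVec (x : V → ℝ) :
    L.mulVec x = ∑ e, (w e * (x (ends e).2 - x (ends e).1)) •
      pairVec (ends e).1 (ends e).2 := by
  rw [hL, _root_.sum_mulVec]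
  exact Finset.sum_congr rfl fun e _ => by rw [smul_vecMulVec_mulVec, pairVec_dot]

lemma L_symm : Lᵀ = L := by
  rw [hL, transpose_sum]
  refine Finset.sum_congr rfl fun e _ => ?_
  rw [transpose_smul]
  congr 1
  ext i j
  simp [vecMulVec_apply, transpose_apply, mul_comm]

lemma L_one : L.mulVec (fun _ => (1:ℝ)) = 0 := by
  rw [L_mulVec ends w L hL]
  simp

lemma quad_form (x : V → ℝ) :
    x ⬝ᵥ L.mulVec x = ∑ e, w e * (x (ends e).2 - x (ends e).1)^2 := by
  rw [L_mulVec ends w L hL]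
  simp only [dotProduct, Finset.sum_apply, Pi.smul_apply, smul_eq_mul, Finset.mul_sum]
  rw [Finset.sum_comm]
  refine Finset.sum_congr rfl fun e _ => ?_
  have : ∀ i, x i * (w e * (x (ends e).2 - x (ends e).1) * pairVec (ends e).1 (ends e).2 i)
      = (w e * (x (ends e).2 - x (ends e).1)) * (x i * pairVec (ends e).1 (ends e).2 i) :=
    fun i => by ring
  simp_rw [this, ← Finset.mul_sum]
  rw [← dotProduct, dot_pairVec]
  ring

end aux

section hard
variable {V E : Type*} [Fintype V] [Fintype E] [DecidableEq V]
variable (ends : E → V × V) (w : E → ℝ) (L : Matrix V V ℝ)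
  (hw : ∀ e, 0 < w e)
  (hconn : ∀ a b : V, Relation.ReflTransGen
      (fun x y => ∃ e, ends e = (x, y) ∨ ends e = (y, x)) a b)
  (hL : L = ∑ e, w e • Matrix.vecMulVec
      (pairVec (ends e).1 (ends e).2) (pairVec (ends e).1 (ends e).2))

include hw hconn hL

lemma ker_const (x : V → ℝ) (hx : L.mulVec x = 0) : ∀ a b : V, x a = x b := by
  have h0 : x ⬝ᵥ L.mulVec x = 0 := by rw [hx]; simp
  rw [quad_form ends w L hL] at h0
  have hnn : ∀ e ∈ Finset.univ, (0:ℝ) ≤ w e * (x (ends e).2 - x (ends e).1)^2 :=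
    fun e _ => mul_nonneg (hw e).le (sq_nonneg _)
  have hz := (Finset.sum_eq_zero_iff_of_nonneg hnn).mp h0
  have hedge : ∀ a b : V, (∃ e, ends e = (a, b) ∨ ends e = (b, a)) → x a = x b := by
    rintro a b ⟨e, he | he⟩
    · have := hz e (Finset.mem_univ e)
      rw [he] at this
      have h2 : (x b - x a)^2 = 0 := by
        rcases mul_eq_zero.mp this with h | h
        · exact absurd h (hw e).ne'
        · exact h
      have := pow_eq_zero_iff (n := 2) (by norm_num) |>.mp h2
      linarith [sub_eq_zero.mp this]
    · have := hz e (Finset.mem_univ e)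
      rw [he] at this
      have h2 : (x a - x b)^2 = 0 := by
        rcases mul_eq_zero.mp this with h | h
        · exact absurd h (hw e).ne'
        · exact h
      have := pow_eq_zero_iff (n := 2) (by norm_num) |>.mp h2
      linarith [sub_eq_zero.mp this]
  intro a b
  induction hconn a b with
  | refl => rfl
  | tail _ hstep ih => exact ih.trans (hedge _ _ hstep)

lemma max_principle (u v : V) (ψ : V → ℝ)
    (hψ : L.mulVec ψ = pairVec u v) : ∀ x, ψ x ≤ ψ v := by
  classical
  -- the maximum of ψ
  obtain ⟨x₀, _, hx₀⟩ := Finset.exists_max_image Finset.univ ψ ⟨v, Finset.mem_univ v⟩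
  have hx₀' : ∀ y, ψ y ≤ ψ x₀ := fun y => hx₀ y (Finset.mem_univ y)
  -- propagation of the maximum
  have prop : ∀ x : V, (∀ y, ψ y ≤ ψ x) → x ≠ v →
      ∀ y, (∃ e, ends e = (x, y) ∨ ends e = (y, x)) → ψ y = ψ x := by
    intro x hxmax hxv y hy
    have hLx : L.mulVec ψ x = ∑ e, w e * (ψ (ends e).2 - ψ (ends e).1) *
        pairVec (ends e).1 (ends e).2 x := by
      rw [L_mulVec ends w L hL]
      simp [Finset.sum_apply, mul_assoc]
    have hle : L.mulVec ψ x ≤ 0 := by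
      rw [hψ]
      simp only [pairVec, if_neg hxv]
      by_cases h : x = u <;> simp [h]
    have hnn : ∀ e ∈ Finset.univ, (0:ℝ) ≤ w e * (ψ (ends e).2 - ψ (ends e).1) *
        pairVec (ends e).1 (ends e).2 x := by
      intro e _
      by_cases h1 : x = (ends e).1 <;> by_cases h2 : x = (ends e).2
      · simp [pairVec, ← h1, ← h2]
      · have : pairVec (ends e).1 (ends e).2 x = -1 := by
          simp [pairVec, if_neg h2, if_pos h1]
        rw [this]
        have := hxmax (ends e).2
        rw [← h1]
        nlinarith [(hw e).le, hxmax (ends e).2]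
      · have : pairVec (ends e).1 (ends e).2 x = 1 := by
          simp [pairVec, if_pos h2, if_neg h1]
        rw [this, ← h2]
        nlinarith [(hw e).le, hxmax (ends e).1]
      · simp [pairVec, if_neg h1, if_neg h2]
    have hsum0 : ∑ e, w e * (ψ (ends e).2 - ψ (ends e).1) *
        pairVec (ends e).1 (ends e).2 x = 0 := by
      have h1 : ∑ e, w e * (ψ (ends e).2 - ψ (ends e).1) *
          pairVec (ends e).1 (ends e).2 x ≤ 0 := by rw [← hLx]; exact hle
      have h2 : 0 ≤ ∑ e, w e * (ψ (ends e).2 - ψ (ends e).1) *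
          pairVec (ends e).1 (ends e).2 x := Finset.sum_nonneg hnn
      linarith
    have hz := (Finset.sum_eq_zero_iff_of_nonneg hnn).mp hsum0
    obtain ⟨e, he | he⟩ := hy
    · by_cases hxy : y = x
      · rw [hxy]
      · have ht := hz e (Finset.mem_univ e)
        rw [he] at ht
        have hxy' : ¬ x = y := fun h => hxy h.symm
        have hp : pairVec x y x = -1 := by
          simp [pairVec, hxy']
        rw [hp] at ht
        simp only at ht
        have : ψ y - ψ x = 0 := by
          rcases mul_eq_zero.mp ht with h | h
          · rcases mul_eq_zero.mp h with h' | h'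
            · exact absurd h' (hw e).ne'
            · exact h'
          · norm_num at h
        linarith
    · by_cases hxy : y = x
      · rw [hxy]
      · have ht := hz e (Finset.mem_univ e)
        rw [he] at ht
        have hxy' : ¬ x = y := fun h => hxy h.symm
        have hp : pairVec y x x = 1 := by
          simp [pairVec, hxy']
        rw [hp] at ht
        simp only [mul_one] at ht
        have : ψ x - ψ y = 0 := by
          rcases mul_eq_zero.mp ht with h | h
          · exact absurd h (hw e).ne'
          · exact h
        linarith
  -- propagate along a path from x₀ to v
  have key : ∀ b : V, Relation.ReflTransGen
      (fun x y => ∃ e, ends e = (x, y) ∨ ends e = (y, x)) x₀ b →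
      (∀ y, ψ y ≤ ψ b) ∨ (∀ y, ψ y ≤ ψ v) := by
    intro b hb
    induction hb with
    | refl => exact Or.inl hx₀'
    | @tail c d _ hstep ih =>
        rcases ih with h | h
        · by_cases hcv : c = v
          · exact Or.inr (hcv ▸ h)
          · have := prop c h hcv d hstep
            exact Or.inl (fun y => (this ▸ h y : ψ y ≤ ψ d))
        · exact Or.inr h
  rcases key v (hconn x₀ v) with h | h <;> exact h

end hard

section pinv
variable {V : Type*} [Fintype V] [DecidableEq V]

lemma pinv_unique (L A B : Matrix V V ℝ)
    (hA1 : L*A*L = L) (hA2 : A*L*A = A) (hA3 : (L*A)ᵀ = L*A) (hA4 : (A*L)ᵀ = A*L)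
    (hB1 : L*B*L = L) (hB2 : B*L*B = B) (hB3 : (L*B)ᵀ = L*B) (hB4 : (B*L)ᵀ = B*L) :
    A = B := by
  have hLA : L*A = L*B := by
    calc L*A = (L*A)ᵀ := hA3.symm
      _ = Aᵀ*Lᵀ := transpose_mul _ _
      _ = Aᵀ*(L*B*L)ᵀ := by rw [hB1]
      _ = Aᵀ*(Lᵀ*(Bᵀ*Lᵀ)) := by rw [transpose_mul, transpose_mul]
      _ = (Aᵀ*Lᵀ)*(Bᵀ*Lᵀ) := by simp only [Matrix.mul_assoc]
      _ = (L*A)ᵀ*(L*B)ᵀ := by rw [transpose_mul L A, transpose_mul L B]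
      _ = (L*A)*(L*B) := by rw [hA3, hB3]
      _ = (L*A*L)*B := by simp only [Matrix.mul_assoc]
      _ = L*B := by rw [hA1]
  have hAL : A*L = B*L := by
    calc A*L = A*(L*B*L) := by rw [hB1]
      _ = (A*L)*(B*L) := by simp only [Matrix.mul_assoc]
      _ = (A*L)ᵀ*(B*L)ᵀ := by rw [hA4, hB4]
      _ = ((B*L)*(A*L))ᵀ := (transpose_mul _ _).symm
      _ = (B*(L*A*L))ᵀ := by simp only [Matrix.mul_assoc]
      _ = (B*L)ᵀ := by rw [hA1]
      _ = B*L := hB4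
  calc A = A*L*A := hA2.symm
    _ = A*(L*A) := Matrix.mul_assoc _ _ _
    _ = A*(L*B) := by rw [hLA]
    _ = (A*L)*B := (Matrix.mul_assoc _ _ _).symm
    _ = (B*L)*B := by rw [hAL]
    _ = B := hB2

lemma Lp_symm (L Lp : Matrix V V ℝ) (hsym : Lᵀ = L)
    (hLp1 : L * Lp * L = L) (hLp2 : Lp * L * Lp = Lp)
    (hLp3 : (L * Lp)ᵀ = L * Lp) (hLp4 : (Lp * L)ᵀ = Lp * L) : Lpᵀ = Lp := by
  have hB1 : L * Lpᵀ * L = L := by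
    have h := congrArg transpose hLp1
    rw [transpose_mul, transpose_mul, hsym] at h
    rwa [← Matrix.mul_assoc] at h
  have hB2 : Lpᵀ * L * Lpᵀ = Lpᵀ := by
    have h := congrArg transpose hLp2
    rw [transpose_mul, transpose_mul, hsym] at h
    rwa [← Matrix.mul_assoc] at h
  have hB3 : (L * Lpᵀ)ᵀ = L * Lpᵀ := by
    have e1 : L * Lpᵀ = Lp * L := by
      calc L*Lpᵀ = Lᵀ*Lpᵀ := by rw [hsym]
        _ = (Lp*L)ᵀ := (transpose_mul _ _).symm
        _ = Lp*L := hLp4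
    rw [e1, hLp4, ← e1]
  have hB4 : (Lpᵀ * L)ᵀ = Lpᵀ * L := by
    have e2 : Lpᵀ * L = L * Lp := by
      calc Lpᵀ*L = Lpᵀ*Lᵀ := by rw [hsym]
        _ = (L*Lp)ᵀ := (transpose_mul _ _).symm
        _ = L*Lp := hLp3
    rw [e2, hLp3, ← e2]
  exact (pinv_unique L Lp Lpᵀ hLp1 hLp2 hLp3 hLp4 hB1 hB2 hB3 hB4).symm
end pinv

section proj
variable {V E : Type*} [Fintype V] [Fintype E] [DecidableEq V]
variable (ends : E → V × V) (w : E → ℝ) (L Lp : Matrix V V ℝ)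
  (hw : ∀ e, 0 < w e)
  (hconn : ∀ a b : V, Relation.ReflTransGen
      (fun x y => ∃ e, ends e = (x, y) ∨ ends e = (y, x)) a b)
  (hL : L = ∑ e, w e • Matrix.vecMulVec
      (pairVec (ends e).1 (ends e).2) (pairVec (ends e).1 (ends e).2))
  (hLp1 : L * Lp * L = L) (hLp3 : (L * Lp)ᵀ = L * Lp) (hLp4 : (Lp * L)ᵀ = Lp * L)

include hw hconn hL hLp1 hLp3 hLp4

lemma proj_pair (hs : Lpᵀ = Lp) (u v : V) :
    (L * Lp).mulVec (pairVec u v) = pairVec u v := by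
  have hsymL := L_symm ends w L hL
  have hcomm : L * Lp = Lp * L := by
    rw [← hLp3, transpose_mul, hs, hsymL]
  have h5 : L * (L * Lp) = L := by
    rw [hcomm, ← Matrix.mul_assoc]; exact hLp1
  set c : V → ℝ := pairVec u v - (L * Lp).mulVec (pairVec u v) with hcdef
  have hc : L.mulVec c = 0 := by
    rw [hcdef, Matrix.mulVec_sub, Matrix.mulVec_mulVec, h5, sub_self]
  have hconst := ker_const ends w L hw hconn hL c hc
  have hsum : ∑ i, c i = 0 := by
    rw [hcdef]
    simp only [Pi.sub_apply, Finset.sum_sub_distrib]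
    have h1 : ∑ i, pairVec u v i = 0 := by
      simp [pairVec, Finset.sum_sub_distrib]
    have h2 : ∑ i, ((L * Lp).mulVec (pairVec u v)) i = 0 := by
      have : ∑ i, ((L * Lp).mulVec (pairVec u v)) i
          = (fun _ => (1:ℝ)) ⬝ᵥ (L.mulVec (Lp.mulVec (pairVec u v))) := by
        rw [Matrix.mulVec_mulVec]
        simp [dotProduct]
      rw [this, dotProduct_mulVec, ← hsymL, vecMul_transpose,
        L_one ends w L hL]
      simp
    rw [h1, h2, sub_self]
  have hcz : ∀ i, c i = 0 := by
    intro i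
    have hcard : (0:ℝ) < Fintype.card V := by
      exact_mod_cast Fintype.card_pos_iff.mpr ⟨u⟩
    have : ∑ j, c j = (Fintype.card V : ℝ) * c i := by
      rw [Finset.sum_congr rfl (fun j _ => hconst j i)]
      simp [Finset.sum_const, nsmul_eq_mul, mul_comm]
    rw [hsum] at this
    have := this.symm
    rcases mul_eq_zero.mp this with h | h
    · linarith
    · exact h
  funext i
  have := hcz i
  rw [hcdef] at this
  simp only [Pi.sub_apply] at this
  linarith
end proj


/-- Effective resistance is a metric on the vertices of a connected
weighted multigraph: for distinct vertices `u, v, z` with Laplacian `L` and Moore–Penrose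
pseudoinverse `Lp = L⁺` (characterized by the four Penrose conditions),
`b_{u,z}ᵀ L⁺ b_{u,z} ≤ b_{u,v}ᵀ L⁺ b_{u,v} + b_{v,z}ᵀ L⁺ b_{v,z}`. -/
theorem effective_resistance_triangle_inequality
    {V E : Type*} [Fintype V] [Fintype E] [DecidableEq V]
    (ends : E → V × V) (w : E → ℝ) (hw : ∀ e, 0 < w e)
    (hconn : ∀ a b : V, Relation.ReflTransGen
      (fun x y => ∃ e, ends e = (x, y) ∨ ends e = (y, x)) a b)
    (L : Matrix V V ℝ)
    (hL : L = ∑ e, w e • Matrix.vecMulVec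
      (pairVec (ends e).1 (ends e).2) (pairVec (ends e).1 (ends e).2))
    (Lp : Matrix V V ℝ)
    (hLp1 : L * Lp * L = L) (hLp2 : Lp * L * Lp = Lp)
    (hLp3 : (L * Lp)ᵀ = L * Lp) (hLp4 : (Lp * L)ᵀ = Lp * L)
    (u v z : V) (huv : u ≠ v) (hvz : v ≠ z) (huz : u ≠ z) :
    pairVec u z ⬝ᵥ Lp.mulVec (pairVec u z)
      ≤ pairVec u v ⬝ᵥ Lp.mulVec (pairVec u v)
        + pairVec v z ⬝ᵥ Lp.mulVec (pairVec v z) := by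
  have hsymL := L_symm ends w L hL
  have hs : Lpᵀ = Lp := Lp_symm L Lp hsymL hLp1 hLp2 hLp3 hLp4
  set ψ1 := Lp.mulVec (pairVec u v) with hψ1def
  set ψ2 := Lp.mulVec (pairVec v z) with hψ2def
  set φ := Lp.mulVec (pairVec u z) with hφdef
  have hψ1 : L.mulVec ψ1 = pairVec u v := by
    rw [hψ1def, Matrix.mulVec_mulVec]
    exact proj_pair ends w L Lp hw hconn hL hLp1 hLp3 hLp4 hs u v
  have hψ2 : L.mulVec ψ2 = pairVec v z := by
    rw [hψ2def, Matrix.mulVec_mulVec]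
    exact proj_pair ends w L Lp hw hconn hL hLp1 hLp3 hLp4 hs v z
  have hmax1 : ∀ x, ψ1 x ≤ ψ1 v := max_principle ends w L hw hconn hL u v ψ1 hψ1
  have hmin2 : ∀ x, ψ2 v ≤ ψ2 x := by
    intro x
    have hneg : L.mulVec (-ψ2) = pairVec z v := by
      rw [Matrix.mulVec_neg, hψ2]
      funext i; simp only [pairVec, Pi.neg_apply]; ring
    have := max_principle ends w L hw hconn hL z v (-ψ2) hneg x
    simpa using this
  -- symmetry swap
  have hswap : ∀ (a b : V → ℝ), a ⬝ᵥ Lp.mulVec b = b ⬝ᵥ Lp.mulVec a := by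
    intro a b
    calc a ⬝ᵥ Lp *ᵥ b = (a ᵥ* Lp) ⬝ᵥ b := dotProduct_mulVec a Lp b
      _ = (a ᵥ* Lpᵀ) ⬝ᵥ b := by rw [hs]
      _ = (Lp *ᵥ a) ⬝ᵥ b := by rw [vecMul_transpose]
      _ = b ⬝ᵥ (Lp *ᵥ a) := dotProduct_comm _ _
  have hsplit : pairVec u z ⬝ᵥ φ = pairVec u v ⬝ᵥ φ + pairVec v z ⬝ᵥ φ := by
    rw [pairVec_add u v z, add_dotProduct]
  have hb1 : pairVec u v ⬝ᵥ φ ≤ pairVec u v ⬝ᵥ ψ1 := by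
    rw [hswap (pairVec u v) (pairVec u z), ← hψ1def, pairVec_dot, pairVec_dot]
    have := hmax1 z
    linarith
  have hb2 : pairVec v z ⬝ᵥ φ ≤ pairVec v z ⬝ᵥ ψ2 := by
    rw [hswap (pairVec v z) (pairVec u z), ← hψ2def, pairVec_dot, pairVec_dot]
    have := hmin2 u
    linarith
  rw [hsplit]
  linarith
end

section
/- If Z is a random symmetric d×d matrix with E[Z] ⪯ 0 and ‖Z‖ ≤ 1 almost surely, then log E[exp(Z)] ⪯ (4/5) E[Z²]. -/
open scoped Matrix.Norms.L2Operator

section Aux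

open Matrix

variable {d : Type*} [Fintype d] [DecidableEq d]

private lemma scalar_exp_bound {x : ℝ} (hx : |x| ≤ 1) :
    Real.exp x ≤ 1 + x + 4 / 5 * x ^ 2 := by
  have h := Real.exp_bound hx (by norm_num : 0 < 3)
  have h2 : |x| ^ 3 ≤ x ^ 2 := by
    have : |x| ^ 3 = |x| * x ^ 2 := by
      rw [pow_succ, sq_abs]; ring
    rw [this]
    nlinarith [abs_nonneg x, sq_nonneg x]
  have hsum : (∑ i ∈ Finset.range 3, x ^ i / i.factorial) = 1 + x + x ^ 2 / 2 := by
    simp [Finset.sum_range_succ, Nat.factorial]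
  rw [hsum] at h
  norm_num [Nat.factorial] at h
  have := abs_le.mp h
  nlinarith [this.2, h2]

private lemma posSemidef_smul {c : ℝ} (hc : 0 ≤ c) {A : Matrix d d ℝ}
    (hA : A.PosSemidef) : (c • A).PosSemidef := by
  refine posSemidef_iff_dotProduct_mulVec.mpr ⟨?_, fun x => ?_⟩
  · unfold Matrix.IsHermitian
    rw [Matrix.conjTranspose_smul, hA.1.eq]
    simp
  · rw [Matrix.smul_mulVec, dotProduct_smul]
    simpa using mul_nonneg hc (hA.dotProduct_mulVec_nonneg x)

private lemma posDef_smul {c : ℝ} (hc : 0 < c) {A : Matrix d d ℝ}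
    (hA : A.PosDef) : (c • A).PosDef := by
  refine posDef_iff_dotProduct_mulVec.mpr ⟨?_, fun x hx => ?_⟩
  · unfold Matrix.IsHermitian
    rw [Matrix.conjTranspose_smul, hA.1.eq]
    simp
  · rw [Matrix.smul_mulVec, dotProduct_smul]
    simpa using mul_pos hc (hA.dotProduct_mulVec_pos hx)

private lemma posSemidef_sum_of_mem {Ω : Type*} (s : Finset Ω) (f : Ω → Matrix d d ℝ)
    (h : ∀ ω ∈ s, (f ω).PosSemidef) : (∑ ω ∈ s, f ω).PosSemidef :=
  Finset.sum_induction f Matrix.PosSemidef (fun _ _ ha hb => ha.add hb)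
    (Matrix.PosSemidef.zero) h

private lemma posSemidef_sum {Ω : Type*} [Fintype Ω] (f : Ω → Matrix d d ℝ)
    (h : ∀ ω, (f ω).PosSemidef) : (∑ ω, f ω).PosSemidef :=
  posSemidef_sum_of_mem _ f (fun ω _ => h ω)

private lemma unitary_conj_posDef {U D : Matrix d d ℝ}
    (hU : U ∈ Matrix.unitaryGroup d ℝ) (hD : D.PosDef) : (U * D * star U).PosDef := by
  refine posDef_iff_dotProduct_mulVec.mpr ⟨?_, fun x hx => ?_⟩
  · unfold Matrix.IsHermitian
    simp only [Matrix.star_eq_conjTranspose, Matrix.conjTranspose_mul,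
      Matrix.conjTranspose_conjTranspose, hD.1.eq, Matrix.mul_assoc]
  · have hUU : U * star U = 1 := (Matrix.mem_unitaryGroup_iff.mp hU)
    set y := (star U) *ᵥ x with hy
    have hyne : y ≠ 0 := by
      intro h0
      apply hx
      have : U *ᵥ y = 0 := by rw [h0, Matrix.mulVec_zero]
      rw [hy, Matrix.mulVec_mulVec, hUU, Matrix.one_mulVec] at this
      exact this
    have key : star x ⬝ᵥ (U * D * star U) *ᵥ x = star y ⬝ᵥ D *ᵥ y := by
      rw [hy, ← Matrix.mulVec_mulVec, ← Matrix.mulVec_mulVec,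
        Matrix.dotProduct_mulVec (star x) U, Matrix.star_mulVec,
        Matrix.star_eq_conjTranspose, Matrix.conjTranspose_conjTranspose]
    rw [key]
    exact hD.dotProduct_mulVec_pos hyne

private lemma cfc_sub_cfc_posSemidef {A : Matrix d d ℝ} (hA : A.IsHermitian)
    (f g : ℝ → ℝ) (h : ∀ i, f (hA.eigenvalues i) ≤ g (hA.eigenvalues i)) :
    (cfc g A - cfc f A).PosSemidef := by
  rw [hA.cfc_eq, hA.cfc_eq]
  unfold Matrix.IsHermitian.cfc
  rw [Unitary.conjStarAlgAut_apply, Unitary.conjStarAlgAut_apply]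
  rw [← Matrix.sub_mul, ← Matrix.mul_sub, Matrix.diagonal_sub]
  have : (Matrix.diagonal
      ((RCLike.ofReal ∘ g ∘ hA.eigenvalues - RCLike.ofReal ∘ f ∘ hA.eigenvalues :
        d → ℝ))).PosSemidef := by
    rw [Matrix.posSemidef_diagonal_iff]
    intro i
    simp only [Pi.sub_apply, Function.comp_apply, RCLike.ofReal_real_eq_id, id_eq]
    simpa using sub_nonneg.mpr (h i)
  simpa [Matrix.star_eq_conjTranspose, Pi.sub_def] using
    this.mul_mul_conjTranspose_same (hA.eigenvectorUnitary : Matrix d d ℝ)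

private lemma cfc_posDef {A : Matrix d d ℝ} (hA : A.IsHermitian)
    (f : ℝ → ℝ) (h : ∀ i, 0 < f (hA.eigenvalues i)) : (cfc f A).PosDef := by
  rw [hA.cfc_eq]
  unfold Matrix.IsHermitian.cfc
  rw [Unitary.conjStarAlgAut_apply]
  have hD : (Matrix.diagonal (RCLike.ofReal ∘ f ∘ hA.eigenvalues :
      d → ℝ)).PosDef := by
    rw [Matrix.posDef_diagonal_iff]
    intro i
    simpa [RCLike.ofReal_real_eq_id] using h i
  exact unitary_conj_posDef (hA.eigenvectorUnitary).2 hD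

end Aux

/-- If `Z` is a random symmetric `d × d` matrix (here: finitely supported,
given by weights `p` on a finite sample space `Ω`) with `E[Z] ⪯ 0` and `‖Z‖ ≤ 1` almost
surely (spectral norm), then `log E[exp Z] ⪯ (4/5) E[Z²]` in the Loewner order, where
`exp` is the matrix exponential and `log` the matrix logarithm (via the continuous
functional calculus). -/
theorem matrix_mgf_bound_by_second_moment
    {d Ω : Type*} [Fintype d] [DecidableEq d] [Fintype Ω]
    (p : Ω → ℝ) (hp : ∀ ω, 0 ≤ p ω) (hsum : ∑ ω, p ω = 1)
    (Z : Ω → Matrix d d ℝ) (hherm : ∀ ω, (Z ω).IsHermitian)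
    (hmean : (-(∑ ω, p ω • Z ω)).PosSemidef)
    (hnorm : ∀ ω, ‖Z ω‖ ≤ 1) :
    ((4 / 5 : ℝ) • (∑ ω, p ω • (Z ω * Z ω))
      - cfc Real.log (∑ ω, p ω • NormedSpace.exp (Z ω))).PosSemidef := by
  classical
  -- notation
  set S1 : Matrix d d ℝ := ∑ ω, p ω • Z ω with hS1
  set B : Matrix d d ℝ := (4 / 5 : ℝ) • (∑ ω, p ω • (Z ω * Z ω)) with hB
  set A : Matrix d d ℝ := ∑ ω, p ω • NormedSpace.exp (Z ω) with hAdef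
  -- the exponential as a cfc
  have hexp : ∀ ω, NormedSpace.exp (Z ω) = cfc Real.exp (Z ω) := fun ω =>
    (CFC.real_exp_eq_normedSpace_exp (hherm ω).isSelfAdjoint).symm
  -- eigenvalue bounds for each Z ω
  have heig : ∀ ω i, |(hherm ω).eigenvalues i| ≤ 1 := by
    intro ω i
    haveI : Nonempty d := ⟨i⟩
    have hmem := (hherm ω).eigenvalues_mem_spectrum_real i
    have := spectrum.norm_le_norm_of_mem hmem
    rw [Real.norm_eq_abs] at this
    exact this.trans (hnorm ω)
  -- Step A: pointwise exponential bound
  have stepA : ∀ ω,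
      ((1 : Matrix d d ℝ) + Z ω + (4 / 5 : ℝ) • (Z ω * Z ω)
        - NormedSpace.exp (Z ω)).PosSemidef := by
    intro ω
    have hle : ∀ i, Real.exp ((hherm ω).eigenvalues i) ≤
        (fun x : ℝ => 1 + x + 4 / 5 * x ^ 2) ((hherm ω).eigenvalues i) := fun i =>
      scalar_exp_bound (heig ω i)
    have h1 := cfc_sub_cfc_posSemidef (hherm ω) Real.exp
      (fun x : ℝ => 1 + x + 4 / 5 * x ^ 2) hle
    have h2 : cfc (fun x : ℝ => 1 + x + 4 / 5 * x ^ 2) (Z ω)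
        = (1 : Matrix d d ℝ) + Z ω + (4 / 5 : ℝ) • (Z ω * Z ω) := by
      have hsa : IsSelfAdjoint (Z ω) := hherm ω
      rw [cfc_add (Z ω) (fun x : ℝ => 1 + x) (fun x : ℝ => 4 / 5 * x ^ 2) (by fun_prop)
          (by fun_prop),
        cfc_add (Z ω) (fun _ : ℝ => 1) (fun x : ℝ => x) (by fun_prop) (by fun_prop),
        cfc_const_mul (4 / 5 : ℝ) (fun x : ℝ => x ^ 2) (Z ω) (by fun_prop),
        cfc_pow (fun x : ℝ => x) 2 (Z ω) (by fun_prop), cfc_id' ℝ (Z ω), cfc_const 1 (Z ω)]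
      simp [sq, Algebra.algebraMap_eq_smul_one]
    rw [hexp ω, ← h2]
    exact h1
  -- A is positive definite
  have hexpPD : ∀ ω, (NormedSpace.exp (Z ω)).PosDef := by
    intro ω
    rw [hexp ω]
    exact cfc_posDef (hherm ω) Real.exp (fun i => Real.exp_pos _)
  obtain ⟨ω₀, hω₀⟩ : ∃ ω, 0 < p ω := by
    by_contra hcon
    push_neg at hcon
    have : (∑ ω, p ω) ≤ 0 := Finset.sum_nonpos (fun ω _ => hcon ω)
    rw [hsum] at this; norm_num at this
  have hAPD : A.PosDef := by
    rw [hAdef, ← Finset.add_sum_erase _ _ (Finset.mem_univ ω₀)]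
    exact (posDef_smul hω₀ (hexpPD ω₀)).add_posSemidef
      (posSemidef_sum_of_mem _ _ fun ω _ => posSemidef_smul (hp ω) (hexpPD ω).posSemidef)
  have hAH : A.IsHermitian := hAPD.1
  -- key1 : 1 + B - A is PSD
  have key1 : ((1 : Matrix d d ℝ) + B - A).PosSemidef := by
    have hsum1 : (∑ ω, p ω • ((1 : Matrix d d ℝ) + Z ω + (4 / 5 : ℝ) • (Z ω * Z ω)
        - NormedSpace.exp (Z ω))).PosSemidef :=
      posSemidef_sum _ fun ω => posSemidef_smul (hp ω) (stepA ω)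
    have hre : (∑ ω, p ω • ((1 : Matrix d d ℝ) + Z ω + (4 / 5 : ℝ) • (Z ω * Z ω)
        - NormedSpace.exp (Z ω))) = (1 : Matrix d d ℝ) + S1 + B - A := by
      rw [hS1, hB, hAdef, Finset.smul_sum]
      have hterm : ∀ ω, p ω • ((1 : Matrix d d ℝ) + Z ω + (4 / 5 : ℝ) • (Z ω * Z ω)
          - NormedSpace.exp (Z ω))
          = p ω • (1 : Matrix d d ℝ) + p ω • Z ω + (4 / 5 : ℝ) • (p ω • (Z ω * Z ω))
            - p ω • NormedSpace.exp (Z ω) := by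
        intro ω
        rw [smul_sub, smul_add, smul_add, smul_comm]
      rw [Finset.sum_congr rfl fun ω _ => hterm ω, Finset.sum_sub_distrib,
        Finset.sum_add_distrib, Finset.sum_add_distrib, ← Finset.sum_smul, hsum, one_smul]
    rw [hre] at hsum1
    have := hsum1.add hmean
    have hfinal : (1 : Matrix d d ℝ) + S1 + B - A + -S1 = 1 + B - A := by abel
    rwa [hfinal] at this
  -- key2 : A - 1 - log A is PSD
  have key2 : (A - 1 - cfc Real.log A).PosSemidef := by
    have heigA : ∀ i, 0 < hAH.eigenvalues i := hAPD.eigenvalues_pos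
    have hle : ∀ i, Real.log (hAH.eigenvalues i) ≤
        (fun x : ℝ => x - 1) (hAH.eigenvalues i) := fun i =>
      Real.log_le_sub_one_of_pos (heigA i)
    have h1 := cfc_sub_cfc_posSemidef hAH Real.log (fun x : ℝ => x - 1) hle
    have h2 : cfc (fun x : ℝ => x - 1) A = A - 1 := by
      have hsa : IsSelfAdjoint A := hAH
      rw [cfc_sub (fun x : ℝ => x) (fun _ : ℝ => 1) A (by fun_prop) (by fun_prop),
        cfc_id' ℝ A, cfc_const 1 A]
      simp [Algebra.algebraMap_eq_smul_one]
    rwa [h2] at h1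
  have := key1.add key2
  have hfinal : (1 : Matrix d d ℝ) + B - A + (A - 1 - cfc Real.log A)
      = B - cfc Real.log A := by abel
  rwa [hfinal] at this
end

section
/- The function f(z) = (e^z − z − 1)/z² (extended by f(0) = 1/2) is positive and monotonically increasing on all of ℝ, and f(1) ≤ 4/5. -/
/-- The function `f z = (e^z - z - 1)/z²` (extended by `f 0 = 1/2`) is
positive and monotonically increasing on all of `ℝ`, and `f 1 ≤ 4/5`. -/
theorem f_pos_monotone_and_f_one_le
    (f : ℝ → ℝ)
    (hf : f = fun z => if z = 0 then 1 / 2 else (Real.exp z - z - 1) / z ^ 2) :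
    (∀ z, 0 < f z) ∧ Monotone f ∧ f 1 ≤ 4 / 5 := by
  have hf0 : f 0 = 1 / 2 := by simp [hf]
  have hfne : ∀ z : ℝ, z ≠ 0 → f z = (Real.exp z - z - 1) / z ^ 2 := by
    intro z hz; simp [hf, hz]
  -- auxiliary function g
  set g : ℝ → ℝ := fun z => (z - 2) * Real.exp z + z + 2 with hg
  have hgdd : ∀ z : ℝ, HasDerivAt g ((z - 1) * Real.exp z + 1) z := by
    intro z
    have h1 : HasDerivAt (fun z : ℝ => (z - 2) * Real.exp z)
        (1 * Real.exp z + (z - 2) * Real.exp z) z :=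
      ((hasDerivAt_id z).sub_const 2).mul (Real.hasDerivAt_exp z)
    have : HasDerivAt (fun z : ℝ => (z - 2) * Real.exp z + z + 2)
        (1 * Real.exp z + (z - 2) * Real.exp z + 1) z := (h1.add (hasDerivAt_id z)).add_const 2
    convert this using 1
    ring
  have hgd_nonneg : ∀ z : ℝ, 0 ≤ (z - 1) * Real.exp z + 1 := by
    intro z
    have h1 := Real.add_one_le_exp (-z)
    have h2 : Real.exp (-z) * Real.exp z = 1 := by
      rw [← Real.exp_add]; simp
    nlinarith [Real.exp_pos z, Real.exp_pos (-z)]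
  have hgmono : Monotone g :=
    monotone_of_deriv_nonneg (fun z => (hgdd z).differentiableAt)
      (fun z => by rw [(hgdd z).deriv]; exact hgd_nonneg z)
  have hg0 : g 0 = 0 := by simp [hg]
  have hg_pos : ∀ z : ℝ, 0 ≤ z → 0 ≤ g z := fun z hz => hg0 ▸ hgmono hz
  have hg_neg : ∀ z : ℝ, z ≤ 0 → g z ≤ 0 := fun z hz => hg0 ▸ hgmono hz
  -- derivative of f off zero
  have hfd : ∀ z : ℝ, z ≠ 0 → HasDerivAt f (z * g z / z ^ 4) z := by
    intro z hz
    have hz2 : (z : ℝ) ^ 2 ≠ 0 := pow_ne_zero 2 hz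
    have hnum : HasDerivAt (fun w : ℝ => Real.exp w - w - 1) (Real.exp z - 1) z := by
      simpa using ((Real.hasDerivAt_exp z).sub (hasDerivAt_id z)).sub_const 1
    have hden : HasDerivAt (fun w : ℝ => w ^ 2) (2 * z) z := by
      simpa [mul_comm] using hasDerivAt_pow 2 z
    have hF : HasDerivAt (fun w : ℝ => (Real.exp w - w - 1) / w ^ 2)
        (((Real.exp z - 1) * z ^ 2 - (Real.exp z - z - 1) * (2 * z)) / (z ^ 2) ^ 2) z :=
      hnum.div hden hz2
    have heq : f =ᶠ[nhds z] fun w : ℝ => (Real.exp w - w - 1) / w ^ 2 := by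
      filter_upwards [isOpen_ne.mem_nhds hz] with w hw
      exact hfne w hw
    have : HasDerivAt f (((Real.exp z - 1) * z ^ 2 - (Real.exp z - z - 1) * (2 * z)) / (z ^ 2) ^ 2) z :=
      hF.congr_of_eventuallyEq heq
    convert this using 1
    field_simp [hg]
    ring
  have hcont : ∀ z : ℝ, z ≠ 0 → ContinuousAt f z := fun z hz =>
    (hfd z hz).differentiableAt.continuousAt
  -- monotone on Ioi 0
  have hmonoP : MonotoneOn f (Set.Ioi 0) := by
    apply monotoneOn_of_deriv_nonneg (convex_Ioi 0)
    · exact fun z hz => (hcont z (ne_of_gt hz)).continuousWithinAt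
    · intro z hz
      rw [interior_Ioi] at hz
      exact (hfd z (ne_of_gt hz)).differentiableAt.differentiableWithinAt
    · intro z hz
      rw [interior_Ioi] at hz
      rw [(hfd z (ne_of_gt hz)).deriv]
      have := hg_pos z (le_of_lt hz)
      exact div_nonneg (mul_nonneg hz.le this) (by positivity)
  -- monotone on Iio 0
  have hmonoN : MonotoneOn f (Set.Iio 0) := by
    apply monotoneOn_of_deriv_nonneg (convex_Iio 0)
    · exact fun z hz => (hcont z (ne_of_lt hz)).continuousWithinAt
    · intro z hz
      rw [interior_Iio] at hz
      exact (hfd z (ne_of_lt hz)).differentiableAt.differentiableWithinAt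
    · intro z hz
      rw [interior_Iio] at hz
      rw [(hfd z (ne_of_lt hz)).deriv]
      have h1 := hg_neg z (le_of_lt hz)
      have hz' : z < 0 := hz
      have h2 : 0 ≤ z * g z := by nlinarith
      exact div_nonneg h2 (by positivity)
  -- quadratic bounds via antitone h
  have hqdd : ∀ z : ℝ, HasDerivAt (fun z : ℝ => z ^ 2 / 2 + z + 1 - Real.exp z)
      (z + 1 - Real.exp z) z := by
    intro z
    have h1 : HasDerivAt (fun z : ℝ => z ^ 2 / 2) z z := by
      simpa using (hasDerivAt_pow 2 z).div_const 2
    have : HasDerivAt (fun z : ℝ => z ^ 2 / 2 + z + 1 - Real.exp z) (z + 1 - Real.exp z) z :=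
      (((h1.add (hasDerivAt_id z)).add_const 1).sub (Real.hasDerivAt_exp z))
    convert this using 1
  have hqanti : Antitone (fun z : ℝ => z ^ 2 / 2 + z + 1 - Real.exp z) := by
    apply antitone_of_deriv_nonpos (fun z => (hqdd z).differentiableAt)
    intro z
    rw [(hqdd z).deriv]
    have := Real.add_one_le_exp z
    linarith
  have hq0 : (fun z : ℝ => z ^ 2 / 2 + z + 1 - Real.exp z) 0 = 0 := by simp
  -- f z ≤ 1/2 for z ≤ 0, f z ≥ 1/2 for z ≥ 0
  have hA : ∀ z : ℝ, z ≤ 0 → f z ≤ 1 / 2 := by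
    intro z hz
    rcases eq_or_lt_of_le hz with h | h
    · simp [h, hf0]
    · have hq := hq0 ▸ hqanti (le_of_lt h)
      rw [hfne z (ne_of_lt h)]
      rw [div_le_iff₀ (pow_two_pos_of_ne_zero (ne_of_lt h))]
      simp only at hq
      nlinarith
  have hB : ∀ z : ℝ, 0 ≤ z → 1 / 2 ≤ f z := by
    intro z hz
    rcases eq_or_lt_of_le hz with h | h
    · rw [← h, hf0]
    · have hq := hq0 ▸ hqanti hz
      rw [hfne z (ne_of_gt h)]
      rw [le_div_iff₀ (pow_two_pos_of_ne_zero (ne_of_gt h))]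
      simp only at hq
      nlinarith
  refine ⟨?_, ?_, ?_⟩
  · -- positivity
    intro z
    rcases eq_or_ne z 0 with h | h
    · rw [h, hf0]; norm_num
    · rw [hfne z h]
      have := Real.add_one_lt_exp h
      have hz2 : (0:ℝ) < z ^ 2 := by positivity
      apply div_pos (by linarith) hz2
  · -- monotone
    intro x y hxy
    rcases lt_trichotomy y 0 with hy | hy | hy
    · exact hmonoN (lt_of_le_of_lt hxy hy) hy hxy
    · exact hy ▸ (hf0 ▸ hA x (hy ▸ hxy))
    · rcases le_or_gt x 0 with hx | hx
      · exact le_trans (hA x hx) (hB y (le_of_lt hy))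
      · exact hmonoP hx (lt_of_lt_of_le hx hxy) hxy
  · -- f 1 ≤ 4/5
    rw [hfne 1 one_ne_zero]
    have := Real.exp_one_lt_d9
    norm_num
    linarith
end

section
/- The trace exponential is monotone with respect to the Loewner order: if A and B are symmetric matrices with A ⪯ B, then tr(exp(A)) ≤ tr(exp(B)). -/
open Matrix NormedSpace Finset

lemma star_mul_diag_mul_apply {d : Type*} [Fintype d] [DecidableEq d]
    (W : Matrix d d ℝ) (f : d → ℝ) (i : d) :
    (star W * Matrix.diagonal f * W) i i = ∑ j, (W j i)^2 * f j := by
  rw [Matrix.mul_apply]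
  refine Finset.sum_congr rfl fun j _ => ?_
  rw [Matrix.mul_diagonal, Matrix.star_apply]
  simp [sq]
  ring

lemma posSemidef_diag_nonneg {d : Type*} [Fintype d] [DecidableEq d]
    {N : Matrix d d ℝ} (h : N.PosSemidef) (i : d) : 0 ≤ N i i := by
  have h0 := h.dotProduct_mulVec_nonneg (Pi.single i 1)
  simpa [dotProduct, Matrix.mulVec, Pi.single_apply, Finset.sum_ite_eq] using h0

lemma exp_conj_unitary {d : Type*} [Fintype d] [DecidableEq d]
    (U X : Matrix d d ℝ) (h1 : star U * U = 1) (h2 : U * star U = 1) :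
    NormedSpace.exp (U * X * star U) = U * NormedSpace.exp X * star U := by
  have := Matrix.exp_units_conj (⟨U, star U, h2, h1⟩ : (Matrix d d ℝ)ˣ) X
  simpa using this

/-- The trace exponential is monotone with respect to the Loewner order:
if `A` and `B` are real symmetric matrices with `A ⪯ B`, then `tr(exp A) ≤ tr(exp B)`. -/
theorem trace_exp_monotone
    {d : Type*} [Fintype d] [DecidableEq d]
    (A B : Matrix d d ℝ) (hA : A.IsHermitian) (hB : B.IsHermitian)
    (hAB : (B - A).PosSemidef) :
    (NormedSpace.exp A).trace ≤ (NormedSpace.exp B).trace := by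
  classical
  set U := (hA.eigenvectorUnitary : Matrix d d ℝ) with hUdef
  set V := (hB.eigenvectorUnitary : Matrix d d ℝ) with hVdef
  set a := hA.eigenvalues with hadef
  set ν := hB.eigenvalues with hνdef
  have hU1 : star U * U = 1 := Unitary.coe_star_mul_self hA.eigenvectorUnitary
  have hU2 : U * star U = 1 := Unitary.coe_mul_star_self hA.eigenvectorUnitary
  have hV1 : star V * V = 1 := Unitary.coe_star_mul_self hB.eigenvectorUnitary
  have hV2 : V * star V = 1 := Unitary.coe_mul_star_self hB.eigenvectorUnitary
  have hofA : (RCLike.ofReal ∘ a : d → ℝ) = a := by funext i; simp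
  have hofB : (RCLike.ofReal ∘ ν : d → ℝ) = ν := by funext i; simp
  have hAspec : A = U * Matrix.diagonal a * star U := by
    have := hA.spectral_theorem
    rwa [Unitary.conjStarAlgAut_apply, hofA] at this
  have hBspec : B = V * Matrix.diagonal ν * star V := by
    have := hB.spectral_theorem
    rwa [Unitary.conjStarAlgAut_apply, hofB] at this
  have hAd : star U * A * U = Matrix.diagonal a := by
    have := hA.conjStarAlgAut_star_eigenvectorUnitary
    rwa [Unitary.conjStarAlgAut_star_apply, hofA] at this
  have hexp_pi : ∀ v : d → ℝ, NormedSpace.exp v = fun i => Real.exp (v i) := by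
    intro v
    rw [Pi.exp_def]
    funext i
    rw [Real.exp_eq_exp_ℝ]
  have htrA : (NormedSpace.exp A).trace = ∑ i, Real.exp (a i) := by
    rw [hAspec, exp_conj_unitary U _ hU1 hU2, Matrix.exp_diagonal, hexp_pi,
      Matrix.trace_mul_cycle, hU1, Matrix.one_mul, Matrix.trace_diagonal]
  set M := star U * B * U with hMdef
  have hps : (M - Matrix.diagonal a).PosSemidef := by
    have h := hAB.conjTranspose_mul_mul_same U
    have heq : Uᴴ * (B - A) * U = M - Matrix.diagonal a := by
      rw [← Matrix.star_eq_conjTranspose, Matrix.mul_sub, Matrix.sub_mul, hAd, ← hMdef]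
    rwa [heq] at h
  have hdiag : ∀ i, a i ≤ M i i := by
    intro i
    have := posSemidef_diag_nonneg hps i
    simp only [Matrix.sub_apply, Matrix.diagonal_apply_eq] at this
    linarith
  set W := star V * U with hWdef
  have hW1 : star W * W = 1 := by
    rw [hWdef, Matrix.star_mul, star_star, Matrix.mul_assoc, ← Matrix.mul_assoc V, hV2,
      Matrix.one_mul, hU1]
  have hM : M = star W * Matrix.diagonal ν * W := by
    rw [hMdef, hBspec, hWdef, Matrix.star_mul, star_star]
    noncomm_ring
  have hexpB : star U * NormedSpace.exp B * U
      = star W * Matrix.diagonal (fun j => Real.exp (ν j)) * W := by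
    rw [hBspec, exp_conj_unitary V _ hV1 hV2, Matrix.exp_diagonal, hexp_pi, hWdef,
      Matrix.star_mul, star_star]
    noncomm_ring
  have hwsum : ∀ i, ∑ j, (W j i)^2 = 1 := by
    intro i
    have h : (star W * W) i i = ∑ j, (W j i)^2 := by
      simp [Matrix.mul_apply, Matrix.star_apply, sq]
    rw [hW1] at h
    simpa using h.symm
  have hkey : ∀ i, Real.exp (M i i) ≤ (star U * NormedSpace.exp B * U) i i := by
    intro i
    rw [hM, hexpB, star_mul_diag_mul_apply, star_mul_diag_mul_apply]
    have := convexOn_exp.map_sum_le (t := Finset.univ) (w := fun j => (W j i)^2)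
      (p := fun j => ν j) (fun j _ => sq_nonneg _) (hwsum i) (fun j _ => Set.mem_univ _)
    simpa [smul_eq_mul, mul_comm] using this
  have htrB : (NormedSpace.exp B).trace = ∑ i, (star U * NormedSpace.exp B * U) i i := by
    have h : ∑ i, (star U * NormedSpace.exp B * U) i i
        = (star U * NormedSpace.exp B * U).trace := rfl
    rw [h, Matrix.trace_mul_cycle, hU2, Matrix.one_mul]
  rw [htrA, htrB]
  calc ∑ i, Real.exp (a i) ≤ ∑ i, Real.exp (M i i) :=
        Finset.sum_le_sum fun i _ => Real.exp_le_exp.mpr (hdiag i)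
    _ ≤ ∑ i, (star U * NormedSpace.exp B * U) i i :=
        Finset.sum_le_sum fun i _ => hkey i
end

section
/- With the truncation setup, P[−εI ⋠ Z or Z ⋠ εI] ≤ P[−εI ⋠ Z̃ or Z̃ ⋠ εI], where Z̃ is the ε-truncated sum; i.e., the truncated sum fails at least as often as the original sum. -/
open scoped Classical

/-- With the truncation setup (finitely supported randomness, weights
`p`), `P[-εI ⋠ Z or Z ⋠ εI] ≤ P[-εI ⋠ Z̃ or Z̃ ⋠ εI]`, where `Z = Σ_{i=1}^k W_i` and
`Z̃ = Σ_{i=1}^k 1[A_i] • W_i` is the `ε`-truncated sum: the truncated sum fails at least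
as often as the original sum. -/
theorem truncated_martingale_failure_domination
    {d Ω : Type*} [Fintype d] [DecidableEq d] [Fintype Ω]
    (p : Ω → ℝ) (hp : ∀ ω, 0 ≤ p ω) (hsum : ∑ ω, p ω = 1)
    (k : ℕ) (W : ℕ → Ω → Matrix d d ℝ) (ε : ℝ) (hε : 0 < ε)
    (A : ℕ → Set Ω)
    (hA : ∀ h, A h = {ω | ∀ j, 1 ≤ j → j < h →
      (ε • (1 : Matrix d d ℝ) - ∑ i ∈ Finset.range j, W i ω).PosSemidef})
    (Z Zt : Ω → Matrix d d ℝ)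
    (hZ : Z = fun ω => ∑ i ∈ Finset.range k, W i ω)
    (hZt : Zt = fun ω => ∑ i ∈ Finset.range k,
      (if ω ∈ A (i + 1) then (1 : ℝ) else 0) • W i ω) :
    ∑ ω ∈ Finset.univ.filter (fun ω =>
        ¬ (ε • (1 : Matrix d d ℝ) + Z ω).PosSemidef ∨
        ¬ (ε • (1 : Matrix d d ℝ) - Z ω).PosSemidef), p ω
      ≤ ∑ ω ∈ Finset.univ.filter (fun ω =>
        ¬ (ε • (1 : Matrix d d ℝ) + Zt ω).PosSemidef ∨
        ¬ (ε • (1 : Matrix d d ℝ) - Zt ω).PosSemidef), p ω := by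
  apply Finset.sum_le_sum_of_subset_of_nonneg
  · intro ω hω
    simp only [Finset.mem_filter, Finset.mem_univ, true_and] at hω ⊢
    by_contra hc
    push_neg at hc
    obtain ⟨h1, h2⟩ := hc
    -- all truncation events hold, up to k
    have key : ∀ i, i < k → ω ∈ A (i + 1) := by
      by_contra hk
      push_neg at hk
      obtain ⟨i0, hi0k, hi0⟩ := hk
      have hex : ∃ h, ω ∉ A (h + 1) := ⟨i0, hi0⟩
      set h := Nat.find hex with hhdef
      have hmem : ω ∉ A (h + 1) := Nat.find_spec hex
      have hmin : ∀ m, m < h → ω ∈ A (m + 1) := fun m hm =>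
        not_not.mp (Nat.find_min hex hm)
      have hhk : h ≤ k := le_of_lt (lt_of_le_of_lt (Nat.find_le hi0) hi0k)
      have hA1 : ω ∈ A 1 := by
        rw [hA]; intro j hj1 hj2; omega
      have hpos : 1 ≤ h := by
        rcases Nat.eq_zero_or_pos h with h0 | h0
        · exact absurd (h0 ▸ hA1) hmem
        · exact h0
      have hAh : ω ∈ A h := by
        have := hmin (h - 1) (by omega)
        simpa [Nat.sub_add_cancel hpos] using this
      -- the h-th partial sum is not bounded
      have hfail : ¬ (ε • (1 : Matrix d d ℝ) - ∑ i ∈ Finset.range h, W i ω).PosSemidef := by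
        intro hP
        apply hmem
        rw [hA]
        intro j hj1 hj2
        rcases Nat.lt_or_ge j h with hj | hj
        · rw [hA] at hAh; exact hAh j hj1 hj
        · have : j = h := by omega
          subst this; exact hP
      -- Zt ω equals the h-th partial sum
      have hZteq : Zt ω = ∑ i ∈ Finset.range h, W i ω := by
        simp only [hZt]
        have hsub : Finset.range h ⊆ Finset.range k := Finset.range_subset_range.mpr hhk
        rw [← Finset.sum_subset hsub]
        · apply Finset.sum_congr rfl
          intro i hi
          rw [if_pos (hmin i (Finset.mem_range.mp hi)), one_smul]
        · intro i _ hih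
          have hih' : h ≤ i :=
            by simpa using hih
          have : ω ∉ A (i + 1) := by
            intro hmem'
            apply hmem
            rw [hA] at hmem' ⊢
            intro j hj1 hj2
            exact hmem' j hj1 (by omega)
          rw [if_neg this, zero_smul]
      exact hfail (hZteq ▸ h2)
    have hZeq : Zt ω = Z ω := by
      rw [hZt, hZ]
      apply Finset.sum_congr rfl
      intro i hi
      rw [if_pos (key i (Finset.mem_range.mp hi)), one_smul]
    rw [hZeq] at h1 h2
    rcases hω with hω | hω
    · exact hω h1
    · exact hω h2
  · intro ω _ _
    exact hp ω
end
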